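/- For every integer n > 3, every ν ≥ 0 and every x ≥ 0, |T_n(s²; x) − x²| ≤ ((5n−6)/(n²−5n+6)) x² + (4νn/(n²−5n+6) + 2n/(n²−5n+6)) x + (4ν²+6ν)/(n²−5n+6), where T_n(s²; x) denotes the Dunkl–Szász–Beta operator applied to g(s) = s². -/

import Mathlib

open MeasureTheory Filter

/-- Dunkl coefficients: `γ_ν(2r) = 2^(2r) r! Γ(r+ν+1/2)/Γ(ν+1/2)`,
`γ_ν(2r+1) = 2^(2r+1) r! Γ(r+ν+3/2)/Γ(ν+1/2)`. -/
noncomputable def dGamma (ν : ℝ) (r : ℕ) : ℝ :=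
  if r % 2 = 0 then
    2 ^ r * (Nat.factorial (r / 2)) * Real.Gamma ((r / 2 : ℕ) + ν + 1 / 2) / Real.Gamma (ν + 1 / 2)
  else
    2 ^ r * (Nat.factorial (r / 2)) * Real.Gamma ((r / 2 : ℕ) + ν + 3 / 2) / Real.Gamma (ν + 1 / 2)

/-- Dunkl exponential `: e_ν(x) = Σ_{r=0}^∞ x^r/γ_ν(r)`. -/
noncomputable def eDunkl (ν x : ℝ) : ℝ := ∑' r : ℕ, x ^ r / dGamma ν r

/-- Dunkl–Szász–Beta operator
`T_n(g;x) = ((n−1)/e_ν(nx)) Σ_{r=1}^∞ C(n+r−2,r−1)(nx)^r/γ_ν(r) ∫_0^∞ s^{r−1}(1+s)^{−(n+r−1)} g(s) ds + g(0)/e_ν(nx)`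
(the sum over `r ≥ 1` is written via the index shift `r = k+1`). -/
noncomputable def Tn (ν : ℝ) (n : ℕ) (g : ℝ → ℝ) (x : ℝ) : ℝ :=
  ((n : ℝ) - 1) / eDunkl ν (n * x) *
      ∑' k : ℕ, (Nat.choose (n + k - 1) k : ℝ) * (n * x) ^ (k + 1) / dGamma ν (k + 1) *
        ∫ s in Set.Ioi (0 : ℝ), s ^ k / (1 + s) ^ (n + k) * g s
    + g 0 / eDunkl ν (n * x)

open Set

lemma contOn (a b : ℕ) : ContinuousOn (fun s : ℝ => s^a / (1+s)^b) (Ici 0) := by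
  apply ContinuousOn.div (by fun_prop) (by fun_prop)
  intro s hs
  have : (0:ℝ) < 1 + s := by have := hs.out; linarith
  positivity

lemma integrable_aux (a b : ℕ) (h : a + 2 ≤ b) :
    IntegrableOn (fun s : ℝ => s ^ a / (1 + s) ^ b) (Set.Ioi 0) := by
  have hIoi : Set.Ioc (0:ℝ) 1 ∪ Set.Ioi 1 = Set.Ioi 0 := Set.Ioc_union_Ioi_eq_Ioi zero_le_one
  rw [← hIoi]
  apply IntegrableOn.union
  · exact (((contOn a b).mono (fun s hs => hs.1)).integrableOn_compact
      isCompact_Icc |>.mono_set Set.Ioc_subset_Icc_self)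
  · have hg : IntegrableOn (fun s : ℝ => s ^ (-2 : ℝ)) (Set.Ioi 1) :=
      integrableOn_Ioi_rpow_of_lt (by norm_num) one_pos
    refine Integrable.mono hg ?_ ?_
    · exact ((contOn a b).mono (fun s hs => le_of_lt (lt_of_lt_of_le one_pos hs.out.le))).aestronglyMeasurable measurableSet_Ioi
    · filter_upwards [ae_restrict_mem measurableSet_Ioi] with s hs
      have h1 : (1:ℝ) < s := hs
      have hs0 : (0:ℝ) < s := lt_trans one_pos h1
      rw [Real.norm_eq_abs, Real.norm_eq_abs]
      rw [abs_of_nonneg (by positivity), abs_of_nonneg (by positivity)]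
      have hb : s ^ b ≤ (1 + s) ^ b := by
        apply pow_le_pow_left₀ hs0.le (by linarith)
      have h2 : s ^ a / (1+s)^b ≤ s^a / s^b := by
        apply div_le_div_of_nonneg_left (by positivity) (by positivity) hb
      refine h2.trans ?_
      have : s ^ a / s ^ b = s ^ ((a:ℝ) - b) := by
        rw [Real.rpow_sub hs0, Real.rpow_natCast, Real.rpow_natCast]
      rw [this]
      apply Real.rpow_le_rpow_of_exponent_le h1.le
      have : (a:ℝ) + 2 ≤ (b:ℝ) := by exact_mod_cast h
      linarith

lemma zpow_lim (c : ℤ) (hc : c < 0) :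
    Tendsto (fun s : ℝ => (1 + s) ^ c) atTop (nhds 0) :=
  (tendsto_zpow_atTop_zero hc).comp (tendsto_atTop_add_const_left _ 1 tendsto_id)

lemma pow_mul_zpow_lim (a c : ℕ) (h : a + 1 < c) :
    Tendsto (fun s : ℝ => s ^ (a+1) * (1 + s) ^ (-(c:ℤ))) atTop (nhds 0) := by
  have h0 : Tendsto (fun s : ℝ => s ^ ((a:ℤ) + 1 - c)) atTop (nhds 0) :=
    tendsto_zpow_atTop_zero (by omega)
  apply tendsto_of_tendsto_of_tendsto_of_le_of_le' tendsto_const_nhds h0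
  · filter_upwards [eventually_ge_atTop (1:ℝ)] with s hs
    have hs0 : (0:ℝ) < s := lt_of_lt_of_le one_pos hs
    have : (0:ℝ) < 1 + s := by linarith
    positivity
  · filter_upwards [eventually_ge_atTop (1:ℝ)] with s hs
    have hs0 : (0:ℝ) < s := lt_of_lt_of_le one_pos hs
    have h1s : (0:ℝ) < 1 + s := by linarith
    have e1 : s ^ (a+1) * s ^ (-(c:ℤ)) = s ^ ((a:ℤ) + 1 - c) := by
      rw [← zpow_natCast s (a+1), ← zpow_add₀ hs0.ne']
      rw [sub_eq_add_neg]; norm_num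
    rw [← e1]
    apply mul_le_mul_of_nonneg_left _ (by positivity)
    rw [zpow_neg, zpow_neg, inv_le_inv₀ (by positivity) (by positivity),
      zpow_natCast, zpow_natCast]
    exact pow_le_pow_left₀ hs0.le (by linarith) c


lemma hasDeriv_zpow_shift (m : ℤ) (x : ℝ) (h0 : (1:ℝ) + x ≠ 0) :
    HasDerivAt (fun s : ℝ => (1 + s) ^ m) ((m * (1 + x) ^ (m - 1)) * 1) x :=
  (hasDerivAt_zpow m (1+x) (Or.inl h0)).comp x ((hasDerivAt_id x).const_add 1)

lemma base_case (m : ℕ) :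
    ∫ s in Ioi (0:ℝ), s ^ 0 / (1 + s) ^ (m + 2) = ((m.factorial : ℝ)) / (m + 1).factorial := by
  have hder : ∀ x ∈ Ici (0:ℝ), HasDerivAt (fun s : ℝ => (1+s) ^ (-((m:ℤ)+1)))
      ((-((m:ℝ)+1)) * (x ^ 0 / (1+x) ^ (m+2))) x := by
    intro x hx
    have h1 : (0:ℝ) < 1 + x := by have := hx.out; linarith
    convert hasDeriv_zpow_shift (-((m:ℤ)+1)) x h1.ne' using 1
    have : -((m:ℤ)+1) - 1 = -((m+2 : ℕ) : ℤ) := by push_cast; ring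
    rw [this, zpow_neg, zpow_natCast]
    push_cast
    field_simp
  have hint : IntegrableOn (fun x : ℝ => (-((m:ℝ)+1)) * (x ^ 0 / (1+x) ^ (m+2))) (Ioi 0) :=
    (integrable_aux 0 (m+2) (by omega)).const_mul _
  have hlim : Tendsto (fun s : ℝ => (1+s) ^ (-((m:ℤ)+1))) atTop (nhds 0) :=
    zpow_lim _ (by omega)
  have key := integral_Ioi_of_hasDerivAt_of_tendsto' hder hint hlim
  rw [integral_const_mul] at key
  have h10 : ((1:ℝ) + 0) ^ (-((m:ℤ)+1)) = 1 := by norm_num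
  rw [h10] at key
  have hm : ((m:ℝ) + 1) ≠ 0 := by positivity
  have : ∫ s in Ioi (0:ℝ), s ^ 0 / (1 + s) ^ (m + 2) = 1 / ((m:ℝ)+1) := by
    field_simp at key ⊢
    linarith
  rw [this, Nat.factorial_succ]
  push_cast
  field_simp

lemma step_case (a c : ℕ) (h : a + 2 ≤ c) :
    ((a:ℝ)+1) * ∫ s in Ioi (0:ℝ), s ^ a/(1+s) ^ c
      = (c:ℝ) * ∫ s in Ioi (0:ℝ), s ^ (a+1)/(1+s) ^ (c+1) := by
  set φ : ℝ → ℝ := fun x => ((a:ℝ)+1) * (x ^ a/(1+x) ^ c) - (c:ℝ) * (x ^ (a+1)/(1+x) ^ (c+1))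
    with hφ
  have hder : ∀ x ∈ Ici (0:ℝ), HasDerivAt (fun s : ℝ => s ^ (a+1) * (1+s) ^ (-(c:ℤ))) (φ x) x := by
    intro x hx
    have h1 : (0:ℝ) < 1 + x := by have := hx.out; linarith
    have hd : HasDerivAt (fun s : ℝ => s ^ (a+1) * (1+s) ^ (-(c:ℤ))) _ x := (hasDerivAt_pow (a+1) x).mul (hasDeriv_zpow_shift (-(c:ℤ)) x h1.ne')
    convert hd using 1
    have e1 : (1+x) ^ (-(c:ℤ)) = ((1+x) ^ c)⁻¹ := by rw [zpow_neg, zpow_natCast]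
    have e2 : (1+x) ^ (-(c:ℤ) - 1) = ((1+x) ^ (c+1))⁻¹ := by
      have : -(c:ℤ) - 1 = -((c+1 : ℕ) : ℤ) := by push_cast; ring
      rw [this, zpow_neg, zpow_natCast]
    rw [hφ]
    simp only [e1, e2]
    push_cast
    field_simp
    ring
  have hint : IntegrableOn φ (Ioi 0) :=
    ((integrable_aux a c h).const_mul _).sub ((integrable_aux (a+1) (c+1) (by omega)).const_mul _)
  have hlim : Tendsto (fun s : ℝ => s ^ (a+1) * (1+s) ^ (-(c:ℤ))) atTop (nhds 0) :=
    pow_mul_zpow_lim a c (by omega)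
  have key := integral_Ioi_of_hasDerivAt_of_tendsto' hder hint hlim
  have h00 : (0:ℝ) ^ (a+1) * ((1:ℝ)+0) ^ (-(c:ℤ)) = 0 := by simp
  rw [h00] at key
  rw [integral_sub ((integrable_aux a c h).const_mul _)
    ((integrable_aux (a+1) (c+1) (by omega)).const_mul _)] at key
  rw [integral_const_mul, integral_const_mul] at key
  linarith

lemma integral_eval (a m : ℕ) :
    ∫ s in Ioi (0:ℝ), s ^ a/(1+s) ^ (a+m+2)
      = (a.factorial * m.factorial : ℝ) / (a+m+1).factorial := by
  induction a with
  | zero =>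
    simpa using base_case m
  | succ a ih =>
    have hstep := step_case a (a+m+2) (by omega)
    have e1 : a + m + 2 + 1 = (a+1) + m + 2 := by omega
    rw [e1, ih] at hstep
    have hpos : ((a:ℝ)+(m:ℝ)+2) ≠ 0 := by positivity
    have hfac : ((a+1+m+1).factorial : ℝ) = ((a:ℝ)+m+2) * ((a+m+1).factorial : ℝ) := by
      have : a+1+m+1 = (a+m+1)+1 := by omega
      rw [this, Nat.factorial_succ]
      push_cast; ring
    have hfac2 : (((a+1).factorial : ℕ) : ℝ) = ((a:ℝ)+1) * (a.factorial : ℝ) := by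
      rw [Nat.factorial_succ]; push_cast; ring
    have hfp : (0:ℝ) < ((a+m+1).factorial : ℝ) := by positivity
    rw [hfac, hfac2]
    rw [eq_div_iff (by positivity)]
    have := hstep
    field_simp at this ⊢
    push_cast at this
    nlinarith [this]

lemma Gamma_base_pos {ν : ℝ} (hν : 0 ≤ ν) : 0 < Real.Gamma (ν + 1/2) :=
  Real.Gamma_pos_of_pos (by linarith)

lemma dGamma_zero {ν : ℝ} (hν : 0 ≤ ν) : dGamma ν 0 = 1 := by
  have h := (Gamma_base_pos hν).ne'
  simp [dGamma]
  field_simp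
  rw [show (ν * 2 + 1) / 2 = ν + 1/2 by ring]; exact h

lemma dGamma_succ {ν : ℝ} (hν : 0 ≤ ν) (r : ℕ) :
    dGamma ν (r+1) = (((r:ℝ)+1) + 2*ν*(if r % 2 = 0 then 1 else 0)) * dGamma ν r := by
  rcases Nat.even_or_odd r with ⟨m, hm⟩ | ⟨m, hm⟩
  · subst hm
    have h2 : (m + m) % 2 = 0 := by omega
    have h3 : (m + m + 1) % 2 = 1 := by omega
    have h4 : (m + m) / 2 = m := by omega
    have h5 : (m + m + 1) / 2 = m := by omega
    have hz : (0:ℝ) < (m:ℝ) + ν + 1/2 := by positivity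
    have hG : Real.Gamma ((m:ℝ) + ν + 3/2) = ((m:ℝ) + ν + 1/2) * Real.Gamma ((m:ℝ) + ν + 1/2) := by
      have := Real.Gamma_add_one hz.ne'
      rw [show (m:ℝ) + ν + 3/2 = ((m:ℝ) + ν + 1/2) + 1 by ring, this]
    simp only [dGamma, h2, h3, h4, h5, if_true, if_false, reduceIte]
    rw [hG]
    push_cast
    ring
  · subst hm
    have h2 : (2*m + 1) % 2 = 1 := by omega
    have h3 : (2*m + 1 + 1) % 2 = 0 := by omega
    have h4 : (2*m + 1) / 2 = m := by omega
    have h5 : (2*m + 1 + 1) / 2 = m + 1 := by omega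
    simp only [dGamma, h2, h3, h4, h5, reduceIte]
    rw [Nat.factorial_succ]
    have : ((m:ℕ)+1 : ℕ) = m + 1 := rfl
    push_cast
    rw [show ((m:ℝ) + 1) + ν + 1/2 = (m:ℝ) + ν + 3/2 by ring]
    ring

lemma dGamma_pos {ν : ℝ} (hν : 0 ≤ ν) (r : ℕ) : 0 < dGamma ν r := by
  induction r with
  | zero => rw [dGamma_zero hν]; norm_num
  | succ r ih =>
    rw [dGamma_succ hν]
    have : (0:ℝ) < ((r:ℝ)+1) + 2*ν*(if r % 2 = 0 then 1 else 0) := by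
      split <;> positivity
    positivity

lemma factorial_le_dGamma {ν : ℝ} (hν : 0 ≤ ν) (r : ℕ) :
    (r.factorial : ℝ) ≤ dGamma ν r := by
  induction r with
  | zero => rw [dGamma_zero hν]; simp
  | succ r ih =>
    rw [dGamma_succ hν, Nat.factorial_succ]
    push_cast
    have h1 : ((r:ℝ)+1) ≤ ((r:ℝ)+1) + 2*ν*(if r % 2 = 0 then 1 else 0) := by
      split <;> [nlinarith; simp]
    calc ((r:ℝ)+1) * (r.factorial : ℝ) ≤ ((r:ℝ)+1) * dGamma ν r := by
          apply mul_le_mul_of_nonneg_left ih (by positivity)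
      _ ≤ (((r:ℝ)+1) + 2*ν*(if r % 2 = 0 then 1 else 0)) * dGamma ν r := by
          apply mul_le_mul_of_nonneg_right h1 (dGamma_pos hν r).le

lemma summable_wt {ν y : ℝ} (hν : 0 ≤ ν) (hy : 0 ≤ y) (f : ℕ → ℝ)
    (hf : ∀ r, |f r| ≤ 4 ^ r) :
    Summable (fun r : ℕ => f r * (y ^ r / dGamma ν r)) := by
  apply Summable.of_norm_bounded (g := fun r : ℕ => (4*y) ^ r / r.factorial)
    (Real.summable_pow_div_factorial (4*y))
  intro r
  rw [Real.norm_eq_abs, abs_mul, abs_div, abs_pow, abs_of_nonneg hy,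
    abs_of_nonneg (dGamma_pos hν r).le, mul_pow]
  have h1 : |f r| * (y^r / dGamma ν r) ≤ 4^r * (y^r / r.factorial) := by
    have h2 : y^r / dGamma ν r ≤ y^r / r.factorial := by
      apply div_le_div_of_nonneg_left (by positivity) _ (factorial_le_dGamma hν r)
      exact_mod_cast r.factorial_pos
    exact mul_le_mul (hf r) h2 (div_nonneg (pow_nonneg hy r) (dGamma_pos hν r).le)
      (by positivity)
  calc |f r| * (y^r / dGamma ν r) ≤ 4^r * (y^r / r.factorial) := h1
    _ = 4^r * y^r / r.factorial := by ring

section series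

noncomputable def Uf (ν y : ℝ) (r : ℕ) : ℝ := y ^ r / dGamma ν r

noncomputable def chif (r : ℕ) : ℝ := if r % 2 = 1 then 1 else 0

variable {ν y : ℝ}

lemma chif_nonneg (r : ℕ) : 0 ≤ chif r := by unfold chif; split <;> norm_num

lemma chif_le_one (r : ℕ) : chif r ≤ 1 := by unfold chif; split <;> norm_num

lemma chif_sq (r : ℕ) : chif r * chif r = chif r := by unfold chif; split <;> norm_num

lemma chif_zero : chif 0 = 0 := by unfold chif; norm_num

lemma chif_succ (m : ℕ) : chif (m+1) = 1 - chif m := by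
  unfold chif
  rcases Nat.even_or_odd m with h | h
  · have h1 : m % 2 = 0 := Nat.even_iff.1 h
    have h2 : (m+1) % 2 = 1 := by omega
    simp [h1, h2]
  · have h1 : m % 2 = 1 := Nat.odd_iff.1 h
    have h2 : (m+1) % 2 = 0 := by omega
    simp [h1, h2]

lemma cast_le_two_pow (r : ℕ) : ((r:ℝ) + 1) ≤ 2 ^ r := by
  have := Nat.lt_two_pow_self (n := r)
  exact_mod_cast this

lemma two_pow_le_four_pow (r : ℕ) : (2:ℝ) ^ r ≤ 4 ^ r := by
  apply pow_le_pow_left₀ <;> norm_num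

lemma wt_bound_mul (r : ℕ) : |(r:ℝ) * ((r:ℝ)+1)| ≤ 4 ^ r := by
  have h1 : (r:ℝ) ≤ 2 ^ r := by have := cast_le_two_pow r; linarith
  have h2 := cast_le_two_pow r
  have h3 : (0:ℝ) ≤ (r:ℝ) := Nat.cast_nonneg r
  rw [abs_of_nonneg (by positivity)]
  calc (r:ℝ) * ((r:ℝ)+1) ≤ 2^r * 2^r := mul_le_mul h1 h2 (by positivity) (by positivity)
    _ = 4 ^ r := by rw [← mul_pow]; norm_num

lemma sum_E (hν : 0 ≤ ν) (hy : 0 ≤ y) : Summable (Uf ν y) := by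
  have := summable_wt hν hy (fun _ => (1:ℝ))
    (fun r => by rw [abs_one]; exact one_le_pow₀ (by norm_num))
  show Summable (fun r => Uf ν y r)
  simpa [Uf] using this

lemma sum_B (hν : 0 ≤ ν) (hy : 0 ≤ y) : Summable (fun r => chif r * Uf ν y r) := by
  refine summable_wt hν hy chif (fun r => ?_)
  rw [abs_of_nonneg (chif_nonneg r)]
  exact (chif_le_one r).trans (one_le_pow₀ (by norm_num))

lemma sum_1 (hν : 0 ≤ ν) (hy : 0 ≤ y) : Summable (fun r : ℕ => (r:ℝ) * Uf ν y r) := by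
  refine summable_wt hν hy _ (fun r => ?_)
  rw [abs_of_nonneg (Nat.cast_nonneg r)]
  have h1 : (r:ℝ) ≤ 2 ^ r := by have := cast_le_two_pow r; linarith
  exact h1.trans (two_pow_le_four_pow r)

lemma sum_q (hν : 0 ≤ ν) (hy : 0 ≤ y) : Summable (fun r : ℕ => (r:ℝ)^2 * Uf ν y r) := by
  refine summable_wt hν hy _ (fun r => ?_)
  have := wt_bound_mul r
  rw [abs_of_nonneg (by positivity)] at this ⊢
  nlinarith [Nat.cast_nonneg (α := ℝ) r]

lemma sum_o (hν : 0 ≤ ν) (hy : 0 ≤ y) :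
    Summable (fun r : ℕ => chif r * ((r:ℝ) * Uf ν y r)) := by
  have h : Summable (fun r : ℕ => (chif r * (r:ℝ)) * Uf ν y r) := by
    refine summable_wt hν hy _ (fun r => ?_)
    rw [abs_mul, abs_of_nonneg (chif_nonneg r), abs_of_nonneg (Nat.cast_nonneg r)]
    have h1 : (r:ℝ) ≤ 4 ^ r := by
      have := cast_le_two_pow r
      have := two_pow_le_four_pow r
      linarith
    calc chif r * (r:ℝ) ≤ 1 * (r:ℝ) :=
          mul_le_mul_of_nonneg_right (chif_le_one r) (Nat.cast_nonneg r)
      _ = (r:ℝ) := one_mul _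
      _ ≤ 4 ^ r := h1
  exact h.congr (fun r => by ring)

lemma sum_2 (hν : 0 ≤ ν) (hy : 0 ≤ y) :
    Summable (fun r : ℕ => (r:ℝ)*((r:ℝ)+1) * Uf ν y r) :=
  summable_wt hν hy _ wt_bound_mul

lemma Uf_shift (hν : 0 ≤ ν) (hy : 0 ≤ y) (m : ℕ) :
    ((m:ℝ)+1) * Uf ν y (m+1) = y * Uf ν y m - 2*ν*(chif (m+1) * Uf ν y (m+1)) := by
  have hχ1 : (if m % 2 = 0 then (1:ℝ) else 0) = chif (m+1) := by
    unfold chif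
    rcases Nat.even_or_odd m with h | h
    · have h1 : m % 2 = 0 := Nat.even_iff.1 h
      have h2 : (m+1) % 2 = 1 := by omega
      simp [h1, h2]
    · have h1 : m % 2 = 1 := Nat.odd_iff.1 h
      have h2 : (m+1) % 2 = 0 := by omega
      simp [h1, h2]
  have hrec : dGamma ν (m+1) = (((m:ℝ)+1) + 2*ν*chif (m+1)) * dGamma ν m := by
    rw [dGamma_succ hν m, hχ1]
  have hχnn := chif_nonneg (m+1)
  have hkey : (((m:ℝ)+1) + 2*ν*chif (m+1)) * Uf ν y (m+1) = y * Uf ν y m := by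
    unfold Uf
    rw [hrec, pow_succ]
    have hc0 : (((m:ℝ)+1) + 2*ν*chif (m+1)) ≠ 0 := by positivity
    field_simp [(dGamma_pos hν m).ne']
  nlinarith [hkey]

lemma tail_B (hν : 0 ≤ ν) (hy : 0 ≤ y) :
    ∑' m : ℕ, chif (m+1) * Uf ν y (m+1) = ∑' r : ℕ, chif r * Uf ν y r := by
  rw [Summable.tsum_eq_zero_add (sum_B hν hy), chif_zero]; ring

lemma claim_A (hν : 0 ≤ ν) (hy : 0 ≤ y) :
    ∑' r : ℕ, (r:ℝ) * Uf ν y r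
      = y * (∑' r, Uf ν y r) - 2*ν*(∑' r : ℕ, chif r * Uf ν y r) := by
  rw [Summable.tsum_eq_zero_add (sum_1 hν hy)]
  simp only [Nat.cast_zero, zero_mul, zero_add, Nat.cast_add, Nat.cast_one]
  rw [tsum_congr (Uf_shift hν hy),
    Summable.tsum_sub ((sum_E hν hy).mul_left y)
      (((summable_nat_add_iff 1).2 (sum_B hν hy)).mul_left (2*ν)),
    tsum_mul_left, tsum_mul_left, tail_B hν hy]

lemma claim_O (hν : 0 ≤ ν) (hy : 0 ≤ y) :
    ∑' r : ℕ, chif r * ((r:ℝ) * Uf ν y r)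
      = y * (∑' r, Uf ν y r) - y * (∑' r : ℕ, chif r * Uf ν y r)
        - 2*ν*(∑' r : ℕ, chif r * Uf ν y r) := by
  rw [Summable.tsum_eq_zero_add (sum_o hν hy), chif_zero]
  simp only [zero_mul, zero_add, Nat.cast_add, Nat.cast_one]
  have hterm : ∀ m : ℕ, chif (m+1) * (((m:ℝ)+1) * Uf ν y (m+1))
      = (y * Uf ν y m - y * (chif m * Uf ν y m)) - 2*ν*(chif (m+1) * Uf ν y (m+1)) := by
    intro m
    calc chif (m+1) * (((m:ℝ)+1) * Uf ν y (m+1))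
        = chif (m+1) * (y * Uf ν y m - 2*ν*(chif (m+1) * Uf ν y (m+1))) := by
          rw [Uf_shift hν hy]
      _ = y * (chif (m+1) * Uf ν y m) - 2*ν*((chif (m+1) * chif (m+1)) * Uf ν y (m+1)) := by
          ring
      _ = y * ((1 - chif m) * Uf ν y m) - 2*ν*(chif (m+1) * Uf ν y (m+1)) := by
          rw [chif_sq, ← chif_succ]
      _ = (y * Uf ν y m - y * (chif m * Uf ν y m)) - 2*ν*(chif (m+1) * Uf ν y (m+1)) := by
          ring
  rw [tsum_congr hterm,
    Summable.tsum_sub (((sum_E hν hy).mul_left y).sub ((sum_B hν hy).mul_left y))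
      (((summable_nat_add_iff 1).2 (sum_B hν hy)).mul_left (2*ν)),
    Summable.tsum_sub ((sum_E hν hy).mul_left y) ((sum_B hν hy).mul_left y),
    tsum_mul_left, tsum_mul_left, tsum_mul_left, tail_B hν hy]

lemma claim_Q (hν : 0 ≤ ν) (hy : 0 ≤ y) :
    ∑' r : ℕ, (r:ℝ)^2 * Uf ν y r
      = y * (∑' r : ℕ, (r:ℝ) * Uf ν y r) + y * (∑' r, Uf ν y r)
        - 2*ν*(∑' r : ℕ, chif r * ((r:ℝ) * Uf ν y r)) := by
  rw [Summable.tsum_eq_zero_add (sum_q hν hy)]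
  simp only [Nat.cast_zero, zero_pow, zero_mul, zero_add, Nat.cast_add, Nat.cast_one,
    ne_eq, OfNat.ofNat_ne_zero, not_false_eq_true]
  have hterm : ∀ m : ℕ, ((m:ℝ)+1)^2 * Uf ν y (m+1)
      = (y * ((m:ℝ) * Uf ν y m) + y * Uf ν y m)
        - 2*ν*(chif (m+1) * (((m:ℝ)+1) * Uf ν y (m+1))) := by
    intro m
    calc ((m:ℝ)+1)^2 * Uf ν y (m+1) = ((m:ℝ)+1) * (((m:ℝ)+1) * Uf ν y (m+1)) := by ring
      _ = ((m:ℝ)+1) * (y * Uf ν y m - 2*ν*(chif (m+1) * Uf ν y (m+1))) := by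
          rw [Uf_shift hν hy]
      _ = (y * ((m:ℝ) * Uf ν y m) + y * Uf ν y m)
          - 2*ν*(chif (m+1) * (((m:ℝ)+1) * Uf ν y (m+1))) := by ring
  have hso' : Summable (fun m : ℕ => chif (m+1) * (((m:ℝ)+1) * Uf ν y (m+1))) := by
    have h := (summable_nat_add_iff 1).2 (sum_o hν hy)
    apply h.congr
    intro m
    push_cast
    rfl
  have htail : ∑' m : ℕ, chif (m+1) * (((m:ℝ)+1) * Uf ν y (m+1))
      = ∑' r : ℕ, chif r * ((r:ℝ) * Uf ν y r) := by
    rw [Summable.tsum_eq_zero_add (sum_o hν hy), chif_zero]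
    simp only [zero_mul, zero_add]
    apply tsum_congr
    intro m
    push_cast
    rfl
  rw [tsum_congr hterm,
    Summable.tsum_sub (((sum_1 hν hy).mul_left y).add ((sum_E hν hy).mul_left y))
      (hso'.mul_left (2*ν)),
    Summable.tsum_add ((sum_1 hν hy).mul_left y) ((sum_E hν hy).mul_left y),
    tsum_mul_left, tsum_mul_left, tsum_mul_left, htail]

lemma series_key (hν : 0 ≤ ν) (hy : 0 ≤ y) :
    (∑' r : ℕ, (r:ℝ)*((r:ℝ)+1) * Uf ν y r)
      = y^2 * (∑' r, Uf ν y r) + (2 - 2*ν) * y * (∑' r, Uf ν y r)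
        + (4*ν^2 - 2*ν) * (∑' r : ℕ, chif r * Uf ν y r) := by
  have hsplit : ∑' r : ℕ, (r:ℝ)*((r:ℝ)+1) * Uf ν y r
      = (∑' r : ℕ, (r:ℝ)^2 * Uf ν y r) + ∑' r : ℕ, (r:ℝ) * Uf ν y r := by
    rw [← Summable.tsum_add (sum_q hν hy) (sum_1 hν hy)]
    exact tsum_congr (fun r => by ring)
  rw [hsplit, claim_Q hν hy, claim_A hν hy, claim_O hν hy]
  ring

end series

lemma Uf_zero {ν y : ℝ} (hν : 0 ≤ ν) : Uf ν y 0 = 1 := by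
  simp [Uf, dGamma_zero hν]

lemma Uf_nonneg {ν y : ℝ} (hν : 0 ≤ ν) (hy : 0 ≤ y) (r : ℕ) : 0 ≤ Uf ν y r :=
  div_nonneg (pow_nonneg hy r) (dGamma_pos hν r).le

lemma one_le_E {ν y : ℝ} (hν : 0 ≤ ν) (hy : 0 ≤ y) : 1 ≤ ∑' r, Uf ν y r := by
  have h := Summable.le_tsum (sum_E hν hy) 0 (fun j _ => Uf_nonneg hν hy j)
  rwa [Uf_zero hν] at h

lemma B_nonneg {ν y : ℝ} (hν : 0 ≤ ν) (hy : 0 ≤ y) :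
    0 ≤ ∑' r : ℕ, chif r * Uf ν y r :=
  tsum_nonneg (fun r => mul_nonneg (chif_nonneg r) (Uf_nonneg hν hy r))

lemma B_le_E {ν y : ℝ} (hν : 0 ≤ ν) (hy : 0 ≤ y) :
    (∑' r : ℕ, chif r * Uf ν y r) ≤ ∑' r, Uf ν y r := by
  apply Summable.tsum_le_tsum _ (sum_B hν hy) (sum_E hν hy)
  intro r
  calc chif r * Uf ν y r ≤ 1 * Uf ν y r :=
        mul_le_mul_of_nonneg_right (chif_le_one r) (Uf_nonneg hν hy r)
    _ = Uf ν y r := one_mul _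

theorem stmt2 (ν : ℝ) (hν : 0 ≤ ν) (n : ℕ) (hn : 3 < n) (x : ℝ) (hx : 0 ≤ x) :
    |Tn ν n (fun s => s ^ 2) x - x ^ 2| ≤
      (5 * (n : ℝ) - 6) / ((n : ℝ) ^ 2 - 5 * n + 6) * x ^ 2 +
        (4 * ν * n / ((n : ℝ) ^ 2 - 5 * n + 6) + 2 * n / ((n : ℝ) ^ 2 - 5 * n + 6)) * x +
        (4 * ν ^ 2 + 6 * ν) / ((n : ℝ) ^ 2 - 5 * n + 6) := by
  obtain ⟨p, rfl⟩ : ∃ p, n = p + 4 := ⟨n - 4, by omega⟩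
  set n : ℕ := p + 4 with hn4
  set y : ℝ := (n : ℝ) * x with hy'
  have hy : 0 ≤ y := by positivity
  set E : ℝ := ∑' r, Uf ν y r with hE
  set B : ℝ := ∑' r : ℕ, chif r * Uf ν y r with hB
  have hE0 : (0:ℝ) < E := lt_of_lt_of_le one_pos (one_le_E hν hy)
  have hB0 : 0 ≤ B := B_nonneg hν hy
  have hBE : B ≤ E := B_le_E hν hy
  set D : ℝ := ((p:ℝ)+1)*((p:ℝ)+2) with hD'
  have hD : (0:ℝ) < D := by positivity
  have hDn : ((n:ℝ))^2 - 5*(n:ℝ) + 6 = D := by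
    rw [hD', hn4]; push_cast; ring
  -- the integral values
  have hInt : ∀ k : ℕ, (∫ s in Ioi (0:ℝ), s ^ k / (1+s) ^ (n+k) * s ^ 2)
      = ((k+2).factorial * p.factorial : ℝ) / (k+p+3).factorial := by
    intro k
    have h1 : (fun s : ℝ => s ^ k / (1+s) ^ (n+k) * s ^ 2)
        = fun s : ℝ => s ^ (k+2) / (1+s) ^ ((k+2)+p+2) := by
      funext s
      have : n + k = (k+2)+p+2 := by omega
      rw [this]; ring
    rw [h1, integral_eval (k+2) p]
    have h2 : k+2+p+1 = k+p+3 := by omega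
    rw [h2]
  -- the series term simplification
  set cD : ℝ := (p.factorial : ℝ) / ((p+3).factorial : ℝ) with hcD
  have hterm : ∀ k : ℕ, (Nat.choose (n + k - 1) k : ℝ) * y ^ (k + 1) / dGamma ν (k + 1) *
        (((k+2).factorial * p.factorial : ℝ) / (k+p+3).factorial)
      = cD * (((k:ℝ)+1)*(((k:ℝ)+1)+1) * Uf ν y (k+1)) := by
    intro k
    have he : n + k - 1 = k + p + 3 := by omega
    have hkf : (k.factorial : ℝ) ≠ 0 := by exact_mod_cast k.factorial_pos.ne'
    have hpf : ((p+3).factorial : ℝ) ≠ 0 := by exact_mod_cast (p+3).factorial_pos.ne'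
    have hkpf : ((k+p+3).factorial : ℝ) ≠ 0 := by exact_mod_cast (k+p+3).factorial_pos.ne'
    have hchR : (Nat.choose (k+p+3) k : ℝ)
        = ((k+p+3).factorial : ℝ) / ((k.factorial : ℝ) * ((p+3).factorial : ℝ)) := by
      rw [eq_div_iff (mul_ne_zero hkf hpf)]
      have h := Nat.choose_mul_factorial_mul_factorial (show k ≤ k+p+3 by omega)
      have h2 : k + p + 3 - k = p + 3 := by omega
      rw [h2] at h
      have h3 : ((Nat.choose (k+p+3) k * k.factorial * (p+3).factorial : ℕ) : ℝ)
          = ((k+p+3).factorial : ℝ) := by exact_mod_cast congrArg (Nat.cast (R := ℝ)) h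
      push_cast at h3
      rw [← mul_assoc]
      exact h3
    have hf2 : ((k+2).factorial : ℝ) = ((k:ℝ)+2)*(((k:ℝ)+1)*(k.factorial : ℝ)) := by
      rw [show k+2 = (k+1)+1 by rfl, Nat.factorial_succ, Nat.factorial_succ]
      push_cast; ring
    have hg : dGamma ν (k+1) ≠ 0 := (dGamma_pos hν (k+1)).ne'
    rw [he, hf2, hcD, hchR]
    unfold Uf
    field_simp
    ring
  -- the sum
  have hsum : (∑' k : ℕ, (Nat.choose (n + k - 1) k : ℝ) * y ^ (k + 1) / dGamma ν (k + 1) *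
        ∫ s in Ioi (0:ℝ), s ^ k / (1 + s) ^ (n + k) * s ^ 2)
      = cD * (∑' r : ℕ, (r:ℝ)*((r:ℝ)+1) * Uf ν y r) := by
    have h1 : (∑' k : ℕ, (Nat.choose (n + k - 1) k : ℝ) * y ^ (k + 1) / dGamma ν (k + 1) *
          ∫ s in Ioi (0:ℝ), s ^ k / (1 + s) ^ (n + k) * s ^ 2)
        = ∑' k : ℕ, cD * (((k:ℝ)+1)*(((k:ℝ)+1)+1) * Uf ν y (k+1)) := by
      apply tsum_congr
      intro k
      rw [hInt k, hterm k]
    rw [h1, tsum_mul_left]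
    congr 1
    rw [Summable.tsum_eq_zero_add (sum_2 hν hy)]
    push_cast
    simp
  -- Tn value
  have hEdef : eDunkl ν ((n:ℝ) * x) = E := by rw [hE]; rfl
  have hTn : Tn ν n (fun s => s ^ 2) x
      = ((n:ℝ)-1)/E * ∑' k : ℕ, (Nat.choose (n + k - 1) k : ℝ) * y ^ (k + 1) / dGamma ν (k + 1) *
          ∫ s in Ioi (0:ℝ), s ^ k / (1 + s) ^ (n + k) * s ^ 2 := by
    simp only [Tn, hEdef, ← hy']
    norm_num
    left
    rw [hy', hEdef]
  have hncast : ((n:ℕ):ℝ) = (p:ℝ) + 4 := by rw [hn4]; push_cast; ring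
  have hn1 : ((n:ℕ):ℝ) - 1 = (p:ℝ) + 3 := by rw [hncast]; ring
  have hfacp3 : (((p+3).factorial : ℕ) : ℝ)
      = ((p:ℝ)+3)*(((p:ℝ)+2)*(((p:ℝ)+1)*(p.factorial : ℝ))) := by
    rw [show p+3 = (p+2)+1 from rfl, Nat.factorial_succ,
      show p+2 = (p+1)+1 from rfl, Nat.factorial_succ, Nat.factorial_succ]
    push_cast; ring
  have hpf0 : (p.factorial : ℝ) ≠ 0 := by exact_mod_cast p.factorial_pos.ne'
  have hcD2 : cD = 1/(D*((p:ℝ)+3)) := by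
    rw [hcD, hfacp3, hD']
    field_simp
  have hS2 : (∑' r : ℕ, (r:ℝ)*((r:ℝ)+1) * Uf ν y r)
      = y^2*E + (2-2*ν)*y*E + (4*ν^2-2*ν)*B := by
    have h := series_key hν hy
    rw [← hE, ← hB] at h
    exact h
  have hTn2 : Tn ν n (fun s => s ^ 2) x
      = (y^2 + (2-2*ν)*y + (4*ν^2-2*ν)*(B/E))/D := by
    rw [hTn, hsum, hS2, hcD2, hn1]
    field_simp
  -- final bound
  have hβ0 : 0 ≤ B/E := div_nonneg hB0 hE0.le
  have hβ1 : B/E ≤ 1 := (div_le_one hE0).2 hBE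
  have hyx : y = ((p:ℝ)+4)*x := by rw [hy', hncast]
  have hdiff : Tn ν n (fun s => s ^ 2) x - x^2
      = ((5*((n:ℕ):ℝ)-6)*x^2 + (2-2*ν)*(((n:ℕ):ℝ)*x) + (4*ν^2-2*ν)*(B/E))/D := by
    rw [hTn2, hyx, hncast, hD']
    field_simp
    ring
  rw [hdiff, hDn]
  rw [abs_div, abs_of_pos hD]
  have hRHS : (5*((n:ℕ):ℝ)-6)/D*x^2 + (4*ν*((n:ℕ):ℝ)/D + 2*((n:ℕ):ℝ)/D)*x + (4*ν^2+6*ν)/D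
      = ((5*((n:ℕ):ℝ)-6)*x^2 + (4*ν*((n:ℕ):ℝ)+2*((n:ℕ):ℝ))*x + (4*ν^2+6*ν))/D := by
    field_simp
  rw [hRHS]
  gcongr
  rw [hncast, abs_le]
  have hp0 : (0:ℝ) ≤ (p:ℝ) := Nat.cast_nonneg p
  generalize hq : B/E = β at hβ0 hβ1 ⊢
  have hb1 : (0:ℝ) ≤ 1 - β := by linarith
  clear * - hβ0 hβ1 hb1 hν hx hp0
  constructor
  · nlinarith [mul_nonneg hν hx, mul_nonneg hp0 hx, mul_nonneg (mul_nonneg hν hp0) hx,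
      sq_nonneg x, mul_nonneg hp0 (sq_nonneg x), mul_nonneg hb1 (sq_nonneg ν),
      mul_nonneg hβ0 hν, mul_nonneg hβ0 (sq_nonneg ν), mul_nonneg hν hb1, sq_nonneg ν]
  · nlinarith [mul_nonneg hν hx, mul_nonneg hp0 hx, mul_nonneg (mul_nonneg hν hp0) hx,
      sq_nonneg x, mul_nonneg hp0 (sq_nonneg x), mul_nonneg hb1 (sq_nonneg ν),
      mul_nonneg hβ0 hν, mul_nonneg hβ0 (sq_nonneg ν), mul_nonneg hν hb1, sq_nonneg ν]
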